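/- Let W be a linearly ordered measurable space, μ = μ̄_1 ⊗ ⋯ ⊗ μ̄_n a database distribution on W^n, and F : W^n → ℝ a measurable query that is symmetric and monotone. Assume μ is F-samplable. Let τ, τ̂ be sampling templates of size n with τ ≈_j τ̂. Then for every ε ≥ 0 and every v ∈ W: Δ_ε( (F ∘ SAMP_τ)_* μ_{j,v} , (F ∘ SAMP_τ̂)_* μ ) ≤ sup_{w ∈ W} Δ_ε( (F ∘ SAMP_τ)_* μ_{j,v} , (F ∘ SAMP_τ)_* μ_{j,w} ). -/

import Mathlib

open MeasureTheory Real
open scoped ENNReal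

noncomputable section

/-- Hockey-stick divergence / privacy curve `Δ_ε(μ,ν)`. -/
def hsDiv {A : Type*} [MeasurableSpace A] (ε : ℝ) (μ ν : Measure A) : ℝ :=
  ⨆ S : {S : Set A // MeasurableSet S}, ((μ S.1).toReal - Real.exp ε * (ν S.1).toReal)

/-- Subsampling map induced by a template. -/
def SAMP {W : Type*} {n m : ℕ} (τ : Fin m → Fin n) (x : Fin n → W) : Fin m → W :=
  fun i => x (τ i)

/-- Product measure with `j`-th factor replaced by the Dirac measure at `v`. -/
def fixEntry {W : Type*} [MeasurableSpace W] {n : ℕ} (μbar : Fin n → Measure W)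
    (j : Fin n) (v : W) : Measure (Fin n → W) :=
  Measure.pi (Function.update μbar j (Measure.dirac v))

open Classical in
/-- Sampling privacy curve `SPC^j` : conditional expectation over templates containing `j`. -/
def SPCj {W A : Type*} [MeasurableSpace W] [MeasurableSpace A] {n m : ℕ}
    (F : (Fin m → W) → A) (μbar : Fin n → Measure W)
    (𝒯 : (Fin m → Fin n) → ℝ≥0∞) (j : Fin n) (ε : ℝ) : ℝ :=
  (∑ τ : Fin m → Fin n, if j ∈ Set.range τ then (𝒯 τ).toReal *
      (⨆ v : W, ⨆ w : W, hsDiv ε (Measure.map (fun x => F (SAMP τ x)) (fixEntry μbar j v))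
        (Measure.map (fun x => F (SAMP τ x)) (fixEntry μbar j w))) else 0) /
  (∑ τ : Fin m → Fin n, if j ∈ Set.range τ then (𝒯 τ).toReal else 0)

open Classical in
/-- Uniform distribution on injective templates (sampling without replacement). -/
def uniformInj (n m : ℕ) : (Fin m → Fin n) → ℝ≥0∞ :=
  fun τ => if Function.Injective τ then
    ((Finset.univ.filter (fun σ : Fin m → Fin n => Function.Injective σ)).card : ℝ≥0∞)⁻¹ else 0

open Classical in
/-- Conditioning of a distribution on templates to an event. -/
def condDist {n m : ℕ} (𝒯 : (Fin m → Fin n) → ℝ≥0∞) (E : Set (Fin m → Fin n)) :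
    (Fin m → Fin n) → ℝ≥0∞ :=
  fun τ => if τ ∈ E then 𝒯 τ / (∑ σ : Fin m → Fin n, if σ ∈ E then 𝒯 σ else 0) else 0

/-- The increasing enumeration of a finite set of indices, as a sampling template. -/
def poissonTemplate {n : ℕ} (s : Finset (Fin n)) : Fin s.card → Fin n :=
  fun i => (s.orderIsoOfFin rfl i : Fin n)

/-- Statistical privacy curve of a query. -/
def Phi {W A : Type*} [MeasurableSpace W] [MeasurableSpace A] {k : ℕ}
    (μbar : Fin k → Measure W) (F : (Fin k → W) → A) (ε : ℝ) : ℝ :=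
  ⨆ j : Fin k, ⨆ v : W, ⨆ w : W,
    hsDiv ε (Measure.map F (fixEntry μbar j v)) (Measure.map F (fixEntry μbar j w))

/-- trade-off function -/
def tradeOff {A : Type*} [MeasurableSpace A] (P Q : Measure A) (α : ℝ) : ℝ :=
  sInf { y | ∃ S : Set A, MeasurableSet S ∧ (P Sᶜ).toReal ≤ α ∧ y = (Q S).toReal }

/-- total variation distance -/
def tvDist {A : Type*} [MeasurableSpace A] (μ ν : Measure A) : ℝ :=
  ⨆ S : {S : Set A // MeasurableSet S}, |(μ S.1).toReal - (ν S.1).toReal|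

/-- support of a measure -/
def msupport {X : Type*} [TopologicalSpace X] [MeasurableSpace X] (μ : Measure X) : Set X :=
  {x | ∀ U : Set X, IsOpen U → x ∈ U → 0 < μ U}

/-- τ ≈_j σ -/
def ApproxAt {n m : ℕ} (j : Fin n) (τ σ : Fin m → Fin n) : Prop :=
  ∀ i, (τ i ≠ j → σ i = τ i) ∧ (τ i = j → σ i ≠ j)

/-- F-samplable -/
def FSamplable {W : Type*} [MeasurableSpace W] {n m : ℕ}
    (μbar : Fin n → Measure W) (F : (Fin m → W) → ℝ) : Prop :=
  ∀ (τ σ : Fin m → Fin n) (j : Fin n) (v w : W) (ε : ℝ), 0 ≤ ε →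
    ∃ S : Set ℝ, ((∃ a, S = Set.Iic a) ∨ (∃ a, S = Set.Ici a) ∨ S = ∅) ∧
      ((Measure.map (fun x => F (SAMP τ x)) (fixEntry μbar j v)) S).toReal -
        Real.exp ε * ((Measure.map (fun x => F (SAMP σ x)) (fixEntry μbar j w)) S).toReal =
      hsDiv ε (Measure.map (fun x => F (SAMP τ x)) (fixEntry μbar j v))
        (Measure.map (fun x => F (SAMP σ x)) (fixEntry μbar j w))

/- ===== auxiliary lemmas for the main theorem ===== -/

section PASaux

variable {W : Type*} [MeasurableSpace W] {n : ℕ}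

lemma PAS_meas_update_right (j : Fin n) (w : W) :
    Measurable (fun x : Fin n → W => Function.update x j w) := by
  classical
  apply measurable_pi_lambda
  intro i
  by_cases h : i = j
  · subst h; simpa using measurable_const
  · simpa [Function.update_of_ne h] using measurable_pi_apply i

lemma PAS_meas_update_pair (k : Fin n) :
    Measurable (fun p : (Fin n → W) × W => Function.update p.1 k p.2) := by
  classical
  apply measurable_pi_lambda
  intro i
  by_cases h : i = k
  · subst h; simpa using measurable_snd
  · simpa [Function.update_of_ne h] using (measurable_fst (α := Fin n → W) (β := W)).eval (a := i)

variable (μbar : Fin n → Measure W)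

lemma PAS_fix_prob (hμ : ∀ i, IsProbabilityMeasure (μbar i)) (j : Fin n) (w : W) :
    ∀ i, IsProbabilityMeasure (Function.update μbar j (Measure.dirac w) i) := by
  classical
  intro i
  by_cases h : i = j
  · subst h; simp only [Function.update_self]; infer_instance
  · simp only [Function.update_of_ne h]; exact hμ i

lemma PAS_fixEntry_prob (hμ : ∀ i, IsProbabilityMeasure (μbar i)) (j : Fin n) (w : W) :
    IsProbabilityMeasure (fixEntry μbar j w) := by
  haveI := PAS_fix_prob μbar hμ j w
  exact inferInstanceAs
    (IsProbabilityMeasure (Measure.pi (Function.update μbar j (Measure.dirac w))))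

lemma PAS_fixEntry_eq_map (hμ : ∀ i, IsProbabilityMeasure (μbar i)) (j : Fin n) (w : W) :
    fixEntry μbar j w =
      Measure.map (fun x : Fin n → W => Function.update x j w) (Measure.pi μbar) := by
  classical
  haveI := hμ
  haveI := PAS_fix_prob μbar hμ j w
  refine Measure.pi_eq fun s hs => ?_
  rw [Measure.map_apply (PAS_meas_update_right j w) (MeasurableSet.univ_pi hs)]
  by_cases hw : w ∈ s j
  · have hpre : (fun x : Fin n → W => Function.update x j w) ⁻¹' Set.pi Set.univ s
        = Set.pi Set.univ (Function.update s j Set.univ) := by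
      ext x
      simp only [Set.mem_preimage, Set.mem_pi, Set.mem_univ, true_implies]
      constructor
      · intro h i
        by_cases hij : i = j
        · subst hij; simp
        · have := h i; rwa [Function.update_of_ne hij] at this ⊢
      · intro h i
        by_cases hij : i = j
        · subst hij; simpa using hw
        · have := h i; rwa [Function.update_of_ne hij] at this ⊢
    rw [hpre, Measure.pi_pi]
    refine Finset.prod_congr rfl fun i _ => ?_
    by_cases hij : i = j
    · subst hij
      simp [Measure.dirac_apply' _ (hs i), Set.indicator_of_mem hw,
        (hμ i).measure_univ]
    · rw [Function.update_of_ne hij, Function.update_of_ne hij]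
  · have hpre : (fun x : Fin n → W => Function.update x j w) ⁻¹' Set.pi Set.univ s = ∅ := by
      ext x
      simp only [Set.mem_preimage, Set.mem_pi, Set.mem_univ, true_implies, Set.mem_empty_iff_false,
        iff_false, not_forall]
      exact ⟨j, by simpa using hw⟩
    rw [hpre, measure_empty]
    symm
    have hz : (Function.update μbar j (Measure.dirac w) j) (s j) = 0 := by
      simp [Measure.dirac_apply' _ (hs j), Set.indicator_of_notMem hw]
    exact Finset.prod_eq_zero (Finset.mem_univ j) hz

lemma PAS_pi_eq_map_update (hμ : ∀ i, IsProbabilityMeasure (μbar i)) (k : Fin n) :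
    Measure.pi μbar =
      Measure.map (fun p : (Fin n → W) × W => Function.update p.1 k p.2)
        ((Measure.pi μbar).prod (μbar k)) := by
  classical
  haveI := hμ
  refine Measure.pi_eq fun s hs => ?_
  rw [Measure.map_apply (PAS_meas_update_pair k) (MeasurableSet.univ_pi hs)]
  have hpre : (fun p : (Fin n → W) × W => Function.update p.1 k p.2) ⁻¹' Set.pi Set.univ s
      = (Set.pi Set.univ (Function.update s k Set.univ)) ×ˢ (s k) := by
    ext ⟨x, u⟩
    simp only [Set.mem_preimage, Set.mem_pi, Set.mem_univ, true_implies, Set.mem_prod]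
    constructor
    · intro h
      refine ⟨fun i => ?_, by simpa using h k⟩
      by_cases hik : i = k
      · subst hik; simp
      · have := h i; rw [Function.update_of_ne hik] at this; rwa [Function.update_of_ne hik]
    · rintro ⟨h1, h2⟩ i
      by_cases hik : i = k
      · subst hik; simpa using h2
      · have := h1 i; rw [Function.update_of_ne hik] at this; rwa [Function.update_of_ne hik]
  rw [hpre, Measure.prod_prod, Measure.pi_pi]
  rw [← Finset.prod_erase_mul Finset.univ _ (Finset.mem_univ k),
    ← Finset.prod_erase_mul Finset.univ _ (Finset.mem_univ k)]
  rw [Function.update_self, (hμ k).measure_univ, mul_one]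
  refine congrArg (· * μbar k (s k)) ?_
  refine Finset.prod_congr rfl fun i hi => ?_
  rw [Function.update_of_ne (Finset.ne_of_mem_erase hi)]

lemma PAS_lintegral_resample (hμ : ∀ i, IsProbabilityMeasure (μbar i)) (k : Fin n)
    (f : (Fin n → W) → ℝ≥0∞) (hf : Measurable f) :
    ∫⁻ x, f x ∂(Measure.pi μbar)
      = ∫⁻ u, ∫⁻ x, f (Function.update x k u) ∂(Measure.pi μbar) ∂(μbar k) := by
  haveI := hμ
  haveI : IsProbabilityMeasure (Measure.pi μbar) := inferInstance
  conv_lhs => rw [PAS_pi_eq_map_update μbar hμ k]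
  rw [lintegral_map hf (PAS_meas_update_pair k)]
  exact lintegral_prod_symm' _ (hf.comp (PAS_meas_update_pair k))

lemma PAS_measure_resample (hμ : ∀ i, IsProbabilityMeasure (μbar i)) (k : Fin n)
    (A : Set (Fin n → W)) (hA : MeasurableSet A) :
    Measure.pi μbar A
      = ∫⁻ u, Measure.pi μbar ((fun x => Function.update x k u) ⁻¹' A) ∂(μbar k) := by
  rw [← lintegral_indicator_one hA,
    PAS_lintegral_resample μbar hμ k (A.indicator 1) (measurable_const.indicator hA)]
  refine lintegral_congr fun u => ?_
  rw [← lintegral_indicator_one ((PAS_meas_update_right k u) hA)]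
  refine lintegral_congr fun x => ?_
  by_cases hx : Function.update x k u ∈ A
  · rw [Set.indicator_of_mem hx, Set.indicator_of_mem (by exact hx)]; rfl
  · rw [Set.indicator_of_notMem hx, Set.indicator_of_notMem (by exact hx)]

lemma PAS_step1 (hμ : ∀ i, IsProbabilityMeasure (μbar i))
    (r : W → W → Prop) (htot : ∀ a b, r a b ∨ r b a)
    (V : Set ((Fin n → W) × W)) (hV : MeasurableSet V)
    (hmono : ∀ ⦃x x' : Fin n → W⦄ ⦃w w' : W⦄,
      (∀ i, r (x i) (x' i)) → r w w' → (x, w) ∈ V → (x', w') ∈ V)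
    (k : Fin n) (w0 : W) (δ : ℝ≥0∞) (hδ : 0 < δ) :
    ∃ w : W, Measure.pi μbar {x | (x, w) ∈ V}
      ≤ Measure.pi μbar {x | (x, x k) ∈ V} + δ := by
  classical
  haveI := hμ
  haveI : IsProbabilityMeasure (Measure.pi μbar) := inferInstance
  have hrefl : ∀ a, r a a := fun a => (htot a a).elim id id
  set Pi0 := Measure.pi μbar with hPi0
  set E : W → Set (Fin n → W) := fun u => (fun x => (Function.update x k u, u)) ⁻¹' V with hE
  have hEmeas : ∀ u, MeasurableSet (E u) := fun u =>
    ((PAS_meas_update_right k u).prodMk measurable_const) hV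
  set H : W → ℝ≥0∞ := fun u => Pi0 (E u) with hH
  have hDmeas : MeasurableSet {x : Fin n → W | (x, x k) ∈ V} :=
    (measurable_id.prodMk (measurable_pi_apply k)) hV
  have key : Pi0 {x | (x, x k) ∈ V} = ∫⁻ u, H u ∂(μbar k) := by
    rw [PAS_measure_resample μbar hμ k _ hDmeas]
    refine lintegral_congr fun u => ?_
    congr 1
    ext x
    simp only [Set.mem_preimage, Set.mem_setOf_eq, hE, Function.update_self]
  have hHle : ∀ u, H u ≤ 1 := fun u => prob_le_one
  have hne : (⨅ u, H u) ≠ ⊤ :=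
    ne_top_of_le_ne_top (by simp : (1 : ℝ≥0∞) ≠ ⊤) ((iInf_le _ w0).trans (hHle w0))
  have hlt : (⨅ u, H u) < (⨅ u, H u) + δ := ENNReal.lt_add_right hne hδ.ne'
  obtain ⟨w, hw⟩ := iInf_lt_iff.mp hlt
  refine ⟨w, ?_⟩
  have hGmeas : MeasurableSet {x : Fin n → W | (x, w) ∈ V} :=
    (measurable_id.prodMk measurable_const) hV
  rw [PAS_measure_resample μbar hμ k _ hGmeas, key]
  have hbound : ∀ u, Pi0 ((fun x => Function.update x k u) ⁻¹' {x | (x, w) ∈ V}) ≤ H u + δ := by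
    intro u
    rcases htot u w with hr | hr
    · have hsub : ((fun x => Function.update x k u) ⁻¹' {x | (x, w) ∈ V}) ⊆ E w := by
        intro x hx
        have hx' : (Function.update x k u, w) ∈ V := hx
        show (Function.update x k w, w) ∈ V
        refine hmono (fun i => ?_) (hrefl w) hx'
        by_cases hik : i = k
        · subst hik; simpa using hr
        · rw [Function.update_of_ne hik, Function.update_of_ne hik]; exact hrefl _
      calc Pi0 _ ≤ H w := measure_mono hsub
        _ ≤ (⨅ u, H u) + δ := hw.le
        _ ≤ H u + δ := add_le_add_left (iInf_le _ u) _
    · have hsub : ((fun x => Function.update x k u) ⁻¹' {x | (x, w) ∈ V}) ⊆ E u := by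
        intro x hx
        have hx' : (Function.update x k u, w) ∈ V := hx
        show (Function.update x k u, u) ∈ V
        exact hmono (fun i => hrefl _) hr hx'
      exact le_trans (measure_mono hsub) (le_add_right le_rfl)
  calc ∫⁻ u, Pi0 ((fun x => Function.update x k u) ⁻¹' {x | (x, w) ∈ V}) ∂(μbar k)
      ≤ ∫⁻ u, (H u + δ) ∂(μbar k) := lintegral_mono hbound
    _ = (∫⁻ u, H u ∂(μbar k)) + δ := by
        rw [lintegral_add_right _ measurable_const, lintegral_const, measure_univ, mul_one]

lemma PAS_stepD (hμ : ∀ i, IsProbabilityMeasure (μbar i))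
    (r : W → W → Prop) (htot : ∀ a b, r a b ∨ r b a) (w0 : W) :
    ∀ K : Finset (Fin n), K.Nonempty →
    ∀ V : Set ((Fin n → W) × W), MeasurableSet V →
    (∀ ⦃x x' : Fin n → W⦄ ⦃w w' : W⦄,
      (∀ i, r (x i) (x' i)) → r w w' → (x, w) ∈ V → (x', w') ∈ V) →
    ∀ δ : ℝ≥0∞, 0 < δ →
    ∃ w : W, Measure.pi μbar {x | (x, w) ∈ V}
      ≤ Measure.pi μbar {x | ∀ k ∈ K, (x, x k) ∈ V} + δ := by
  classical
  have hrefl : ∀ a, r a a := fun a => (htot a a).elim id id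
  intro K
  induction K using Finset.cons_induction with
  | empty => intro h; exact absurd h (by simp)
  | cons a s ha IH =>
    intro _ V hV hmono δ hδ
    rcases s.eq_empty_or_nonempty with rfl | hs
    · obtain ⟨w, hw⟩ := PAS_step1 μbar hμ r htot V hV hmono a w0 δ hδ
      refine ⟨w, ?_⟩
      have hset : {x : Fin n → W | ∀ k ∈ Finset.cons a ∅ ha, (x, x k) ∈ V}
          = {x | (x, x a) ∈ V} := by
        ext x; simp
      rw [hset]; exact hw
    · set U' : Set ((Fin n → W) × W) := {p | p ∈ V ∧ (p.1, p.1 a) ∈ V} with hU'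
      have hU'meas : MeasurableSet U' :=
        hV.inter ((measurable_fst.prodMk ((measurable_pi_apply a).comp measurable_fst)) hV)
      have hU'mono : ∀ ⦃x x' : Fin n → W⦄ ⦃w w' : W⦄,
          (∀ i, r (x i) (x' i)) → r w w' → (x, w) ∈ U' → (x', w') ∈ U' := by
        intro x x' w w' hx hw hp
        exact ⟨hmono hx hw hp.1, hmono hx (hx a) hp.2⟩
      obtain ⟨w₁, hw₁⟩ := IH hs U' hU'meas hU'mono (δ / 2) (ENNReal.half_pos hδ.ne')
      set V₂ : Set ((Fin n → W) × W) := {p | p ∈ V ∧ (p.1, w₁) ∈ V} with hV₂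
      have hV₂meas : MeasurableSet V₂ :=
        hV.inter ((measurable_fst.prodMk measurable_const) hV)
      have hV₂mono : ∀ ⦃x x' : Fin n → W⦄ ⦃w w' : W⦄,
          (∀ i, r (x i) (x' i)) → r w w' → (x, w) ∈ V₂ → (x', w') ∈ V₂ := by
        intro x x' w w' hx hw hp
        exact ⟨hmono hx hw hp.1, hmono hx (hrefl w₁) hp.2⟩
      obtain ⟨w₂, hw₂⟩ := PAS_step1 μbar hμ r htot V₂ hV₂meas hV₂mono a w0 (δ / 2)
        (ENNReal.half_pos hδ.ne')
      obtain ⟨m, hm1, hm2⟩ : ∃ m, r m w₁ ∧ r m w₂ := by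
        rcases htot w₁ w₂ with h | h
        · exact ⟨w₁, hrefl w₁, h⟩
        · exact ⟨w₂, h, hrefl w₂⟩
      refine ⟨m, ?_⟩
      have e1 : {x : Fin n → W | (x, x a) ∈ V₂} = {x | (x, w₁) ∈ U'} := by
        ext x
        simp only [Set.mem_setOf_eq, hV₂, hU']
        exact and_comm
      have e2 : {x : Fin n → W | ∀ k ∈ s, (x, x k) ∈ U'}
          = {x | ∀ k ∈ Finset.cons a s ha, (x, x k) ∈ V} := by
        ext x
        simp only [Set.mem_setOf_eq, hU', Finset.mem_cons]
        constructor
        · intro h k hk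
          rcases hk with rfl | hk
          · exact (h _ hs.choose_spec).2
          · exact (h k hk).1
        · intro h k hk
          exact ⟨h k (Or.inr hk), h a (Or.inl rfl)⟩
      calc Measure.pi μbar {x | (x, m) ∈ V}
          ≤ Measure.pi μbar {x | (x, w₂) ∈ V₂} := by
            refine measure_mono fun x hx => ?_
            exact ⟨hmono (fun i => hrefl _) hm2 hx, hmono (fun i => hrefl _) hm1 hx⟩
        _ ≤ Measure.pi μbar {x | (x, x a) ∈ V₂} + δ / 2 := hw₂
        _ = Measure.pi μbar {x | (x, w₁) ∈ U'} + δ / 2 := by rw [e1]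
        _ ≤ (Measure.pi μbar {x | ∀ k ∈ s, (x, x k) ∈ U'} + δ / 2) + δ / 2 :=
            add_le_add_left hw₁ _
        _ = Measure.pi μbar {x | ∀ k ∈ Finset.cons a s ha, (x, x k) ∈ V} + δ := by
            rw [e2, add_assoc, ENNReal.add_halves]

end PASaux

section PASaux2

lemma PAS_real_le {a b : ℝ} (h : ∀ δ : ℝ, 0 < δ → a ≤ b + δ) : a ≤ b := by
  by_contra hc
  push_neg at hc
  have := h ((a - b) / 2) (by linarith)
  linarith

variable {A : Type*} [MeasurableSpace A]

lemma PAS_hsDiv_bdd (ε : ℝ) (μ ν : Measure A) [IsProbabilityMeasure μ]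
    (S : {S : Set A // MeasurableSet S}) :
    (μ S.1).toReal - Real.exp ε * (ν S.1).toReal ≤ 1 := by
  have h1 : (μ S.1).toReal ≤ 1 := by
    have h := prob_le_one (μ := μ) (s := S.1)
    have := ENNReal.toReal_mono (by simp) h
    simpa using this
  nlinarith [Real.exp_pos ε, ENNReal.toReal_nonneg (a := ν S.1)]

lemma PAS_le_hsDiv (ε : ℝ) (μ ν : Measure A) [IsProbabilityMeasure μ]
    (S : Set A) (hS : MeasurableSet S) :
    (μ S).toReal - Real.exp ε * (ν S).toReal ≤ hsDiv ε μ ν := by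
  have hbdd : BddAbove (Set.range fun S : {S : Set A // MeasurableSet S} =>
      (μ S.1).toReal - Real.exp ε * (ν S.1).toReal) := by
    refine ⟨1, ?_⟩
    rintro y ⟨S', rfl⟩
    exact PAS_hsDiv_bdd ε μ ν S'
  exact le_ciSup hbdd ⟨S, hS⟩

lemma PAS_hsDiv_nonneg (ε : ℝ) (μ ν : Measure A) [IsProbabilityMeasure μ] :
    0 ≤ hsDiv ε μ ν := by
  have := PAS_le_hsDiv ε μ ν ∅ MeasurableSet.empty
  simpa using this

lemma PAS_hsDiv_le_one (ε : ℝ) (μ ν : Measure A) [IsProbabilityMeasure μ] :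
    hsDiv ε μ ν ≤ 1 := by
  haveI : Nonempty {S : Set A // MeasurableSet S} := ⟨⟨∅, MeasurableSet.empty⟩⟩
  exact ciSup_le (PAS_hsDiv_bdd ε μ ν)

end PASaux2

section PAScore

variable {W : Type*} [MeasurableSpace W] [LinearOrder W] {n : ℕ}

lemma PAS_core (μbar : Fin n → Measure W) (hμ : ∀ i, IsProbabilityMeasure (μbar i))
    (F : (Fin n → W) → ℝ) (hFmeas : Measurable F) (hFmono : Monotone F)
    (j : Fin n) (τ σ : Fin n → Fin n) (hτσ : ApproxAt j τ σ) (v : W)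
    (S : Set ℝ) (hS : (∃ a, S = Set.Iic a) ∨ ∃ a, S = Set.Ici a)
    (δ : ℝ) (hδ : 0 < δ) :
    ∃ w : W, ((Measure.map (fun x => F (SAMP τ x)) (fixEntry μbar j w)) S).toReal
      ≤ ((Measure.map (fun x => F (SAMP σ x)) (Measure.pi μbar)) S).toReal + δ := by
  classical
  haveI := hμ
  haveI : IsProbabilityMeasure (Measure.pi μbar) := inferInstance
  have hmτ : Measurable fun x : Fin n → W => F (SAMP τ x) :=
    hFmeas.comp (measurable_pi_lambda _ fun i => measurable_pi_apply (τ i))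
  have hmσ : Measurable fun x : Fin n → W => F (SAMP σ x) :=
    hFmeas.comp (measurable_pi_lambda _ fun i => measurable_pi_apply (σ i))
  have hSmeas : MeasurableSet S := by
    rcases hS with ⟨a, rfl⟩ | ⟨a, rfl⟩
    · exact measurableSet_Iic
    · exact measurableSet_Ici
  set U : Set ((Fin n → W) × W) :=
    {p | F (SAMP τ (Function.update p.1 j p.2)) ∈ S} with hU
  have hUmeas : MeasurableSet U := by
    have hm : Measurable fun p : (Fin n → W) × W => F (SAMP τ (Function.update p.1 j p.2)) :=
      hFmeas.comp (measurable_pi_lambda _ fun i =>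
        (measurable_pi_apply (τ i)).comp (PAS_meas_update_pair j))
    exact hm hSmeas
  have hLHS : ∀ w, (Measure.map (fun x => F (SAMP τ x)) (fixEntry μbar j w)) S
      = Measure.pi μbar {x | (x, w) ∈ U} := by
    intro w
    rw [Measure.map_apply hmτ hSmeas, PAS_fixEntry_eq_map μbar hμ j w,
      Measure.map_apply (PAS_meas_update_right j w) (hmτ hSmeas)]
    rfl
  have hRHS : (Measure.map (fun x => F (SAMP σ x)) (Measure.pi μbar)) S
      = Measure.pi μbar ((fun x => F (SAMP σ x)) ⁻¹' S) := Measure.map_apply hmσ hSmeas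
  by_cases hI : ∃ i, τ i = j
  · obtain ⟨i₀, hi₀⟩ := hI
    set K : Finset (Fin n) := (Finset.univ.filter fun i => τ i = j).image σ with hK
    have hKne : K.Nonempty :=
      ⟨σ i₀, Finset.mem_image.mpr ⟨i₀, Finset.mem_filter.mpr ⟨Finset.mem_univ _, hi₀⟩, rfl⟩⟩
    have hmemK : ∀ i, τ i = j → σ i ∈ K := fun i hi =>
      Finset.mem_image.mpr ⟨i, Finset.mem_filter.mpr ⟨Finset.mem_univ _, hi⟩, rfl⟩
    rcases hS with ⟨a, rfl⟩ | ⟨a, rfl⟩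
    · -- S = Iic a : antitone case, r := flipped order
      have hUmono : ∀ ⦃x x' : Fin n → W⦄ ⦃w w' : W⦄,
          (∀ i, x' i ≤ x i) → (w' ≤ w) → (x, w) ∈ U → (x', w') ∈ U := by
        intro x x' w w' hx hw hmem
        have hle : SAMP τ (Function.update x' j w') ≤ SAMP τ (Function.update x j w) := by
          intro i
          show Function.update x' j w' (τ i) ≤ Function.update x j w (τ i)
          by_cases hij : τ i = j
          · rw [hij, Function.update_self, Function.update_self]; exact hw
          · rw [Function.update_of_ne hij, Function.update_of_ne hij]; exact hx _
        exact le_trans (hFmono hle) hmem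
      obtain ⟨w, hw⟩ := PAS_stepD μbar hμ (fun b c => c ≤ b)
        (fun b c => (le_total c b).imp id id) v K hKne U hUmeas
        (fun x x' w w' hx hw hm => hUmono hx hw hm)
        (ENNReal.ofReal δ) (ENNReal.ofReal_pos.mpr hδ)
      have hsub : {x : Fin n → W | ∀ k ∈ K, (x, x k) ∈ U}
          ⊆ (fun x => F (SAMP σ x)) ⁻¹' (Set.Iic a) := by
        intro x hx
        obtain ⟨k0, hk0K, hmax⟩ := K.exists_max_image (fun k => x k) hKne
        have h1 : F (SAMP σ x) ≤ F (SAMP τ (Function.update x j (x k0))) := by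
          refine hFmono fun i => ?_
          show x (σ i) ≤ Function.update x j (x k0) (τ i)
          by_cases hij : τ i = j
          · rw [hij, Function.update_self]
            exact hmax (σ i) (hmemK i hij)
          · rw [Function.update_of_ne hij, (hτσ i).1 hij]
        exact le_trans h1 (hx k0 hk0K)
      refine ⟨w, ?_⟩
      rw [hLHS w, hRHS]
      have h2 : Measure.pi μbar {x | (x, w) ∈ U}
          ≤ Measure.pi μbar ((fun x => F (SAMP σ x)) ⁻¹' Set.Iic a) + ENNReal.ofReal δ :=
        hw.trans (add_le_add_left (measure_mono hsub) _)
      have h3 := ENNReal.toReal_mono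
        (ENNReal.add_ne_top.mpr ⟨measure_ne_top _ _, ENNReal.ofReal_ne_top⟩) h2
      rwa [ENNReal.toReal_add (measure_ne_top _ _) ENNReal.ofReal_ne_top,
        ENNReal.toReal_ofReal hδ.le] at h3
    · -- S = Ici a : monotone case, r := order
      have hUmono : ∀ ⦃x x' : Fin n → W⦄ ⦃w w' : W⦄,
          (∀ i, x i ≤ x' i) → (w ≤ w') → (x, w) ∈ U → (x', w') ∈ U := by
        intro x x' w w' hx hw hmem
        have hle : SAMP τ (Function.update x j w) ≤ SAMP τ (Function.update x' j w') := by
          intro i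
          show Function.update x j w (τ i) ≤ Function.update x' j w' (τ i)
          by_cases hij : τ i = j
          · rw [hij, Function.update_self, Function.update_self]; exact hw
          · rw [Function.update_of_ne hij, Function.update_of_ne hij]; exact hx _
        exact le_trans hmem (hFmono hle)
      obtain ⟨w, hw⟩ := PAS_stepD μbar hμ (fun b c => b ≤ c)
        (fun b c => le_total b c) v K hKne U hUmeas
        (fun x x' w w' hx hw hm => hUmono hx hw hm)
        (ENNReal.ofReal δ) (ENNReal.ofReal_pos.mpr hδ)
      have hsub : {x : Fin n → W | ∀ k ∈ K, (x, x k) ∈ U}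
          ⊆ (fun x => F (SAMP σ x)) ⁻¹' (Set.Ici a) := by
        intro x hx
        obtain ⟨k0, hk0K, hmin⟩ := K.exists_min_image (fun k => x k) hKne
        have h1 : F (SAMP τ (Function.update x j (x k0))) ≤ F (SAMP σ x) := by
          refine hFmono fun i => ?_
          show Function.update x j (x k0) (τ i) ≤ x (σ i)
          by_cases hij : τ i = j
          · rw [hij, Function.update_self]
            exact hmin (σ i) (hmemK i hij)
          · rw [Function.update_of_ne hij, (hτσ i).1 hij]
        exact le_trans (hx k0 hk0K) h1
      refine ⟨w, ?_⟩
      rw [hLHS w, hRHS]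
      have h2 : Measure.pi μbar {x | (x, w) ∈ U}
          ≤ Measure.pi μbar ((fun x => F (SAMP σ x)) ⁻¹' Set.Ici a) + ENNReal.ofReal δ :=
        hw.trans (add_le_add_left (measure_mono hsub) _)
      have h3 := ENNReal.toReal_mono
        (ENNReal.add_ne_top.mpr ⟨measure_ne_top _ _, ENNReal.ofReal_ne_top⟩) h2
      rwa [ENNReal.toReal_add (measure_ne_top _ _) ENNReal.ofReal_ne_top,
        ENNReal.toReal_ofReal hδ.le] at h3
  · -- τ avoids j
    have hτj : ∀ i, τ i ≠ j := fun i h => hI ⟨i, h⟩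
    have hστ : ∀ i, σ i = τ i := fun i => (hτσ i).1 (hτj i)
    refine ⟨v, ?_⟩
    have heq : (Measure.map (fun x => F (SAMP τ x)) (fixEntry μbar j v)) S
        = (Measure.map (fun x => F (SAMP σ x)) (Measure.pi μbar)) S := by
      rw [hLHS v, hRHS]
      congr 1
      ext x
      have hx : SAMP τ (Function.update x j v) = SAMP σ x := by
        funext i
        show Function.update x j v (τ i) = x (σ i)
        rw [Function.update_of_ne (hτj i), hστ i]
      show F (SAMP τ (Function.update x j v)) ∈ S ↔ F (SAMP σ x) ∈ S
      rw [hx]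
    rw [heq]
    linarith

end PAScore

/-- for a symmetric monotone query with a samplable database distribution,
comparing a fixed-entry distribution sampled via τ against the unconditioned distribution
sampled via σ (with τ ≈_j σ) is no worse than the worst comparison of two
fixed-entry distributions sampled via τ. -/
theorem hsDiv_approx_template_le_sup
    {W : Type*} [MeasurableSpace W] [LinearOrder W] {n : ℕ}
    (μbar : Fin n → Measure W) (hμ : ∀ i, IsProbabilityMeasure (μbar i))
    (F : (Fin n → W) → ℝ) (hFmeas : Measurable F)
    (hFsym : ∀ (perm : Equiv.Perm (Fin n)) (x : Fin n → W), F (x ∘ perm) = F x)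
    (hFmono : Monotone F)
    (hFsamp : FSamplable μbar F)
    (j : Fin n) (τ σ : Fin n → Fin n) (hτσ : ApproxAt j τ σ)
    (ε : ℝ) (hε : 0 ≤ ε) (v : W) :
    hsDiv ε (Measure.map (fun x => F (SAMP τ x)) (fixEntry μbar j v))
        (Measure.map (fun x => F (SAMP σ x)) (Measure.pi μbar))
      ≤ ⨆ w : W, hsDiv ε (Measure.map (fun x => F (SAMP τ x)) (fixEntry μbar j v))
          (Measure.map (fun x => F (SAMP τ x)) (fixEntry μbar j w)) := by
  classical
  haveI := hμ
  haveI : IsProbabilityMeasure (Measure.pi μbar) := inferInstance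
  have hmτ : Measurable fun x : Fin n → W => F (SAMP τ x) :=
    hFmeas.comp (measurable_pi_lambda _ fun i => measurable_pi_apply (τ i))
  have hmσ : Measurable fun x : Fin n → W => F (SAMP σ x) :=
    hFmeas.comp (measurable_pi_lambda _ fun i => measurable_pi_apply (σ i))
  haveI hfixP : ∀ w : W, IsProbabilityMeasure (fixEntry μbar j w) :=
    fun w => PAS_fixEntry_prob μbar hμ j w
  haveI hPprob : IsProbabilityMeasure
      (Measure.map (fun x => F (SAMP τ x)) (fixEntry μbar j v)) :=
    Measure.isProbabilityMeasure_map hmτ.aemeasurable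
  have hσj : ∀ i, σ i ≠ j := by
    intro i
    by_cases h : τ i = j
    · exact (hτσ i).2 h
    · rw [(hτσ i).1 h]; exact h
  have hQeq : Measure.map (fun x => F (SAMP σ x)) (fixEntry μbar j v)
      = Measure.map (fun x => F (SAMP σ x)) (Measure.pi μbar) := by
    rw [PAS_fixEntry_eq_map μbar hμ j v, Measure.map_map hmσ (PAS_meas_update_right j v)]
    congr 1
    funext x
    show F (SAMP σ (Function.update x j v)) = F (SAMP σ x)
    congr 1
    funext i
    show Function.update x j v (σ i) = x (σ i)
    exact Function.update_of_ne (hσj i) _ _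
  obtain ⟨S, hSform, hSval⟩ := hFsamp τ σ j v v ε hε
  rw [hQeq] at hSval
  rw [← hSval]
  have hbddW : BddAbove (Set.range fun w : W =>
      hsDiv ε (Measure.map (fun x => F (SAMP τ x)) (fixEntry μbar j v))
        (Measure.map (fun x => F (SAMP τ x)) (fixEntry μbar j w))) := by
    refine ⟨1, ?_⟩
    rintro y ⟨w, rfl⟩
    exact PAS_hsDiv_le_one ε _ _
  have hformS : ((∃ a, S = Set.Iic a) ∨ ∃ a, S = Set.Ici a) ∨ S = ∅ := by tauto
  rcases hformS with hform | rfl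
  · have hSmeas : MeasurableSet S := by
      rcases hform with ⟨a, rfl⟩ | ⟨a, rfl⟩
      · exact measurableSet_Iic
      · exact measurableSet_Ici
    refine PAS_real_le fun δ hδ => ?_
    have hδ' : 0 < δ / Real.exp ε := div_pos hδ (Real.exp_pos ε)
    obtain ⟨w, hw⟩ := PAS_core μbar hμ F hFmeas hFmono j τ σ hτσ v S hform _ hδ'
    have hexp : 0 < Real.exp ε := Real.exp_pos ε
    have h1 : Real.exp ε * ((Measure.map (fun x => F (SAMP τ x)) (fixEntry μbar j w)) S).toReal
        ≤ Real.exp ε *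
            ((Measure.map (fun x => F (SAMP σ x)) (Measure.pi μbar)) S).toReal + δ := by
      have hmul := mul_le_mul_of_nonneg_left hw hexp.le
      have : Real.exp ε * (δ / Real.exp ε) = δ := by field_simp
      nlinarith [hmul]
    have h2 : ((Measure.map (fun x => F (SAMP τ x)) (fixEntry μbar j v)) S).toReal -
          Real.exp ε *
            ((Measure.map (fun x => F (SAMP τ x)) (fixEntry μbar j w)) S).toReal
        ≤ hsDiv ε (Measure.map (fun x => F (SAMP τ x)) (fixEntry μbar j v))
            (Measure.map (fun x => F (SAMP τ x)) (fixEntry μbar j w)) :=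
      PAS_le_hsDiv ε _ _ S hSmeas
    have h3 : hsDiv ε (Measure.map (fun x => F (SAMP τ x)) (fixEntry μbar j v))
          (Measure.map (fun x => F (SAMP τ x)) (fixEntry μbar j w))
        ≤ ⨆ w : W, hsDiv ε (Measure.map (fun x => F (SAMP τ x)) (fixEntry μbar j v))
            (Measure.map (fun x => F (SAMP τ x)) (fixEntry μbar j w)) :=
      le_ciSup hbddW w
    linarith
  · have h0 : 0 ≤ ⨆ w : W, hsDiv ε (Measure.map (fun x => F (SAMP τ x)) (fixEntry μbar j v))
        (Measure.map (fun x => F (SAMP τ x)) (fixEntry μbar j w)) :=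
      le_trans (PAS_hsDiv_nonneg ε _ _) (le_ciSup hbddW v)
    simpa using h0

end
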